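/- Fix an even integer k ≥ 2 and a sequence δ = (δ₁, …, δ_k) of positive real numbers. There exists a constant c > 0 such that for every integer n ≥ k+1 there exists a finite set P ⊆ ℝ³ with |P| ≤ n whose number of k-chains with respect to δ is at least c · n^{k/2 + 1}. -/

import Mathlib

namespace Stmt9

noncomputable def ept (x y z : ℝ) : EuclideanSpace ℝ (Fin 3) := WithLp.toLp 2 ![x, y, z]

lemma dist_ept (x y z x' y' z' : ℝ) :
    dist (ept x y z) (ept x' y' z') = Real.sqrt ((x-x')^2+(y-y')^2+(z-z')^2) := by
  rw [EuclideanSpace.dist_eq]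
  simp [ept, Fin.sum_univ_three, Real.dist_eq, sq_abs]

lemma ept_inj {x y z x' y' z' : ℝ} (h : ept x y z = ept x' y' z') : x = x' ∧ y = y' ∧ z = z' :=
  ⟨congrArg (fun v => v 0) h, congrArg (fun v => v 1) h, congrArg (fun v => v 2) h⟩

/-- heights of axis points -/
noncomputable def hh (δ : ℕ → ℝ) : ℕ → ℝ
  | 0 => 0
  | i+1 => hh δ i + max (δ (2*i+1)) (δ (2*i+2))

/-- offset of center of circle `i+1` above `hh i` -/
noncomputable def uu (δ : ℕ → ℝ) (i : ℕ) : ℝ :=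
  ((δ (2*i+1))^2 - (δ (2*i+2))^2 + (max (δ (2*i+1)) (δ (2*i+2)))^2)
    / (2 * max (δ (2*i+1)) (δ (2*i+2)))

/-- center height of circle i -/
noncomputable def zz (δ : ℕ → ℝ) (m : ℕ) : ℕ → ℝ
  | 0 => 0
  | i+1 => if i+1 = m then hh δ (m-1) else hh δ i + uu δ i

/-- radius of circle i -/
noncomputable def rr (δ : ℕ → ℝ) (m : ℕ) : ℕ → ℝ
  | 0 => δ 0
  | i+1 => if i+1 = m then δ (2*m-1) else Real.sqrt ((δ (2*i+1))^2 - (uu δ i)^2)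

variable {δ : ℕ → ℝ}

lemma uu_sq_lt (hδ : ∀ i, 0 < δ i) (i : ℕ) : (uu δ i)^2 < (δ (2*i+1))^2 := by
  have ha := hδ (2*i+1)
  have hb := hδ (2*i+2)
  rw [uu]
  rcases max_cases (δ (2*i+1)) (δ (2*i+2)) with ⟨hm, hab⟩ | ⟨hm, hab⟩ <;>
      rw [hm, div_pow, div_lt_iff₀ (by positivity)]
  · have h4 : 0 < 4*(δ (2*i+1))^2 - (δ (2*i+2))^2 := by nlinarith
    nlinarith [mul_pos (mul_pos hb hb) h4]
  · have h4 : 0 < 4*(δ (2*i+2))^2 - (δ (2*i+1))^2 := by nlinarith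
    nlinarith [mul_pos (mul_pos ha ha) h4]

lemma rr_pos (hδ : ∀ i, 0 < δ i) (m i : ℕ) : 0 < rr δ m i := by
  cases i with
  | zero => exact hδ 0
  | succ i =>
    rw [rr]
    split
    · exact hδ _
    · have := uu_sq_lt hδ i
      exact Real.sqrt_pos.mpr (by linarith)

lemma rr_sq_middle (hδ : ∀ i, 0 < δ i) {m i : ℕ} (h : i+1 ≠ m) :
    (rr δ m (i+1))^2 = (δ (2*i+1))^2 - (uu δ i)^2 := by
  rw [rr, if_neg h]
  exact Real.sq_sqrt (by linarith [uu_sq_lt hδ i])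

lemma uu_mul (hδ : ∀ i, 0 < δ i) (i : ℕ) :
    uu δ i * (2 * max (δ (2*i+1)) (δ (2*i+2))) =
      (δ (2*i+1))^2 - (δ (2*i+2))^2 + (max (δ (2*i+1)) (δ (2*i+2)))^2 := by
  rw [uu]
  have : (0:ℝ) < max (δ (2*i+1)) (δ (2*i+2)) := lt_max_of_lt_left (hδ _)
  field_simp

lemma claimA (hδ : ∀ i, 0 < δ i) (m : ℕ) : ∀ l < m,
    (rr δ m l)^2 + (zz δ m l - hh δ l)^2 = (δ (2*l))^2 := by
  intro l hl
  cases l with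
  | zero => simp [rr, zz, hh]
  | succ i =>
    have hne : i+1 ≠ m := hl.ne
    rw [rr_sq_middle hδ hne, zz, if_neg hne]
    have hu := uu_mul hδ i
    have hhs : hh δ (i+1) = hh δ i + max (δ (2*i+1)) (δ (2*i+2)) := rfl
    rw [hhs]
    have h2 : 2*(i+1) = 2*i+2 := by ring
    rw [h2]
    linear_combination -hu

lemma claimB (hδ : ∀ i, 0 < δ i) (m : ℕ) : ∀ l < m,
    (rr δ m (l+1))^2 + (zz δ m (l+1) - hh δ l)^2 = (δ (2*l+1))^2 := by
  intro l hl
  by_cases hne : l+1 = m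
  · rw [rr, zz, if_pos hne, if_pos hne]
    have h1 : m - 1 = l := by omega
    have h2 : 2*m - 1 = 2*l+1 := by omega
    rw [h1, h2]
    ring
  · rw [rr_sq_middle hδ hne, zz, if_neg hne]
    ring

lemma hh_strictMono (hδ : ∀ i, 0 < δ i) : StrictMono (hh δ) := by
  apply strictMono_nat_of_lt_succ
  intro n
  have : 0 < max (δ (2*n+1)) (δ (2*n+2)) := lt_max_of_lt_left (hδ _)
  show hh δ n < hh δ n + _
  linarith

noncomputable def ang (e : ℕ) : ℝ := Real.pi / (2*(e:ℝ)+4)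

lemma ang_nonneg (e : ℕ) : 0 ≤ ang e := by
  rw [ang]
  positivity

lemma ang_le_pi (e : ℕ) : ang e ≤ Real.pi := by
  have h : (0:ℝ) ≤ (e:ℝ) := Nat.cast_nonneg e
  exact div_le_self Real.pi_pos.le (by linarith)

lemma ang_inj {e e' : ℕ} (h : ang e = ang e') : e = e' := by
  rw [ang, ang] at h
  have h1 : (2*(e:ℝ)+4) ≠ 0 := by positivity
  have h2 : (2*(e':ℝ)+4) ≠ 0 := by positivity
  rw [div_eq_div_iff h1 h2] at h
  have := mul_left_cancel₀ Real.pi_ne_zero h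
  have : (e:ℝ) = (e':ℝ) := by linarith
  exact_mod_cast this

noncomputable def cpt (δ : ℕ → ℝ) (m i j : ℕ) : EuclideanSpace ℝ (Fin 3) :=
  ept (rr δ m i * Real.cos (ang (i + (m+1)*j))) (rr δ m i * Real.sin (ang (i + (m+1)*j)))
    (zz δ m i)

noncomputable def apt (δ : ℕ → ℝ) (m l : ℕ) : EuclideanSpace ℝ (Fin 3) := ept 0 0 (hh δ l)

lemma dist_cpt_apt (m i j l : ℕ) :
    dist (cpt δ m i j) (apt δ m l) = Real.sqrt ((rr δ m i)^2 + (zz δ m i - hh δ l)^2) := by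
  rw [cpt, apt, dist_ept]
  congr 1
  linear_combination (rr δ m i)^2 * Real.sin_sq_add_cos_sq (ang (i + (m+1)*j))

lemma pair_inj {M i i' j j' : ℕ} (hi : i < M) (hi' : i' < M) (h : i + M*j = i' + M*j') :
    i = i' ∧ j = j' := by
  have h1 : (i + M*j) % M = (i' + M*j') % M := by rw [h]
  rw [Nat.add_mul_mod_self_left, Nat.add_mul_mod_self_left, Nat.mod_eq_of_lt hi,
    Nat.mod_eq_of_lt hi'] at h1
  refine ⟨h1, ?_⟩
  subst h1
  have : M * j = M * j' := by omega
  exact Nat.eq_of_mul_eq_mul_left (by omega) this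

lemma cpt_injective (hδ : ∀ i, 0 < δ i) {m i j i' j' : ℕ} (hi : i < m+1) (hi' : i' < m+1)
    (h : cpt δ m i j = cpt δ m i' j') : i = i' ∧ j = j' := by
  obtain ⟨h1, h2, h3⟩ := ept_inj h
  set e := i + (m+1)*j with he
  set e' := i' + (m+1)*j' with he'
  have c1 := Real.sin_sq_add_cos_sq (ang e)
  have c2 := Real.sin_sq_add_cos_sq (ang e')
  have p1 := rr_pos hδ m i
  have p2 := rr_pos hδ m i'
  have e1 : (rr δ m i)^2 = (rr δ m i * Real.cos (ang e))^2 + (rr δ m i * Real.sin (ang e))^2 := by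
    linear_combination (-(rr δ m i)^2) * c1
  have e2 : (rr δ m i')^2 =
      (rr δ m i' * Real.cos (ang e'))^2 + (rr δ m i' * Real.sin (ang e'))^2 := by
    linear_combination (-(rr δ m i')^2) * c2
  rw [h1, h2] at e1
  have hsq : (rr δ m i)^2 = (rr δ m i')^2 := e1.trans e2.symm
  have hr : rr δ m i = rr δ m i' := by
    rw [← Real.sqrt_sq p1.le, ← Real.sqrt_sq p2.le, hsq]
  have hc : Real.cos (ang e) = Real.cos (ang e') := by
    rw [hr] at h1
    exact mul_left_cancel₀ p2.ne' h1
  have hang : ang e = ang e' :=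
    Real.injOn_cos ⟨ang_nonneg e, ang_le_pi e⟩ ⟨ang_nonneg e', ang_le_pi e'⟩ hc
  exact pair_inj hi hi' (ang_inj hang)

lemma cpt_ne_apt (hδ : ∀ i, 0 < δ i) (m i j l : ℕ) : cpt δ m i j ≠ apt δ m l := by
  intro h
  obtain ⟨h1, h2, h3⟩ := ept_inj h
  have c1 := Real.sin_sq_add_cos_sq (ang (i + (m+1)*j))
  have p1 := rr_pos hδ m i
  rcases mul_eq_zero.mp h1 with h' | h'
  · exact absurd h' p1.ne'
  rcases mul_eq_zero.mp h2 with h'' | h''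
  · exact absurd h'' p1.ne'
  rw [h', h''] at c1
  norm_num at c1

end Stmt9

/-- The number of `k`-chains with respect to `δ` with `i`-th point in `P i`:
`(k+1)`-tuples of pairwise distinct points with consecutive distances `δ i`. -/
noncomputable def chainCount (d k : ℕ) (δ : Fin k → ℝ)
    (P : Fin (k + 1) → Set (EuclideanSpace ℝ (Fin d))) : ℕ :=
  Set.ncard {p : Fin (k + 1) → EuclideanSpace ℝ (Fin d) |
    Function.Injective p ∧ (∀ i, p i ∈ P i) ∧
    ∀ i : Fin k, dist (p i.castSucc) (p i.succ) = δ i}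

open Stmt9 in
theorem stmt_9 (k : ℕ) (hk : 2 ≤ k) (hkeven : Even k)
    (δ : Fin k → ℝ) (hδ : ∀ i, 0 < δ i) :
    ∃ c > (0 : ℝ), ∀ n : ℕ, k + 1 ≤ n →
      ∃ P : Finset (EuclideanSpace ℝ (Fin 3)), P.card ≤ n ∧
        c * (n : ℝ) ^ (k / 2 + 1 : ℕ) ≤
          (chainCount 3 k δ (fun _ => (P : Set (EuclideanSpace ℝ (Fin 3)))) : ℝ) := by
  classical
  obtain ⟨m, hkm⟩ : ∃ m, k = 2*m := by
    obtain ⟨t, ht⟩ := hkeven; exact ⟨t, by omega⟩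
  have hm1 : 1 ≤ m := by omega
  set δ' : ℕ → ℝ := fun i => if h : i < k then δ ⟨i, h⟩ else 1 with hδ'def
  have hδ' : ∀ i, 0 < δ' i := by
    intro i; rw [hδ'def]; dsimp only; split
    · exact hδ _
    · exact one_pos
  refine ⟨(((2*m+1)*(m+1) : ℝ))⁻¹ ^ (m+1), by positivity, ?_⟩
  intro n hn
  set N := (n - m)/(m+1) with hNdef
  set P : Finset (EuclideanSpace ℝ (Fin 3)) :=
    ((Finset.range m).image (apt δ' m)) ∪
      ((Finset.range (m+1) ×ˢ Finset.range N).image fun q => cpt δ' m q.1 q.2) with hPdef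
  refine ⟨P, ?_, ?_⟩
  · have h1 : P.card ≤ m + (m+1)*N := by
      rw [hPdef]
      refine (Finset.card_union_le _ _).trans (add_le_add ?_ ?_)
      · exact (Finset.card_image_le).trans (by simp)
      · exact (Finset.card_image_le).trans (by simp)
    have h2 : (m+1)*N ≤ n - m := by
      rw [hNdef, mul_comm]; exact Nat.div_mul_le_self _ _
    omega
  · unfold chainCount
    set g : (Fin (m+1) → Fin N) → ℕ → ℕ :=
      fun f i => if h : i < m+1 then (f ⟨i, h⟩ : ℕ) else 0 with hgdef
    set F : (ℕ → ℕ) → ℕ → EuclideanSpace ℝ (Fin 3) :=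
      fun g0 v => if Even v then cpt δ' m (v/2) (g0 (v/2)) else apt δ' m (v/2) with hFdef
    have hFe : ∀ g0 l, F g0 (2*l) = cpt δ' m l (g0 l) := by
      intro g0 l
      simp only [hFdef]
      rw [if_pos ⟨l, two_mul l⟩]
      have h2 : 2*l/2 = l := by omega
      rw [h2]
    have hFo : ∀ g0 l, F g0 (2*l+1) = apt δ' m l := by
      intro g0 l
      simp only [hFdef]
      rw [if_neg (by rintro ⟨t, ht⟩; omega)]
      have h2 : (2*l+1)/2 = l := by omega
      rw [h2]
    set Ψ : (Fin (m+1) → Fin N) → (Fin (k+1) → EuclideanSpace ℝ (Fin 3)) :=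
      fun f q => F (g f) q.val with hΨdef
    set S : Set (Fin (k+1) → EuclideanSpace ℝ (Fin 3)) :=
      {p : Fin (k + 1) → EuclideanSpace ℝ (Fin 3) |
        Function.Injective p ∧ (∀ i, p i ∈ (P : Set (EuclideanSpace ℝ (Fin 3)))) ∧
        ∀ i : Fin k, dist (p i.castSucc) (p i.succ) = δ i} with hSdef
    have hchain : ∀ f : Fin (m+1) → Fin N, Ψ f ∈ S := by
      intro f
      refine ⟨?_, ?_, ?_⟩
      · -- injectivity
        intro q q' hq
        simp only [hΨdef] at hq
        rcases Nat.even_or_odd (q : ℕ) with ⟨a, ha⟩ | ⟨a, ha⟩ <;>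
          rcases Nat.even_or_odd (q' : ℕ) with ⟨b, hb⟩ | ⟨b, hb⟩
        · rw [show (q:ℕ) = 2*a by omega, show (q':ℕ) = 2*b by omega, hFe, hFe] at hq
          have ha' : a < m+1 := by have := q.isLt; omega
          have hb' : b < m+1 := by have := q'.isLt; omega
          obtain ⟨h1, -⟩ := cpt_injective hδ' ha' hb' hq
          exact Fin.ext (by omega)
        · rw [show (q:ℕ) = 2*a by omega, show (q':ℕ) = 2*b+1 by omega, hFe, hFo] at hq
          exact absurd hq (cpt_ne_apt hδ' m _ _ _)
        · rw [show (q:ℕ) = 2*a+1 by omega, show (q':ℕ) = 2*b by omega, hFo, hFe] at hq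
          exact absurd hq.symm (cpt_ne_apt hδ' m _ _ _)
        · rw [show (q:ℕ) = 2*a+1 by omega, show (q':ℕ) = 2*b+1 by omega, hFo, hFo] at hq
          obtain ⟨-, -, h3⟩ := ept_inj hq
          have h4 := (hh_strictMono hδ').injective h3
          exact Fin.ext (by omega)
      · -- membership
        intro q
        simp only [hΨdef]
        rw [Finset.mem_coe, hPdef, Finset.mem_union]
        rcases Nat.even_or_odd (q : ℕ) with ⟨a, ha⟩ | ⟨a, ha⟩
        · rw [show (q:ℕ) = 2*a by omega, hFe]
          have ha' : a < m+1 := by have := q.isLt; omega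
          have hga : g f a < N := by
            simp only [hgdef]
            rw [dif_pos ha']
            exact (f ⟨a, ha'⟩).isLt
          right
          rw [Finset.mem_image]
          exact ⟨(a, g f a), Finset.mem_product.mpr
            ⟨Finset.mem_range.mpr ha', Finset.mem_range.mpr hga⟩, rfl⟩
        · rw [show (q:ℕ) = 2*a+1 by omega, hFo]
          have ha' : a < m := by have := q.isLt; omega
          left
          rw [Finset.mem_image]
          exact ⟨a, Finset.mem_range.mpr ha', rfl⟩
      · -- distances
        intro i
        simp only [hΨdef]
        rcases Nat.even_or_odd (i : ℕ) with ⟨l, hl⟩ | ⟨l, hl⟩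
        · have hlm : l < m := by have := i.isLt; omega
          rw [Fin.coe_castSucc, Fin.val_succ, show (i:ℕ) = 2*l by omega, hFe, hFo]
          rw [dist_cpt_apt, claimA hδ' m l hlm, Real.sqrt_sq (hδ' _).le]
          rw [hδ'def]; dsimp only
          rw [dif_pos (show 2*l < k by omega)]
          exact congrArg δ (Fin.ext (by simp; omega))
        · have hlm : l < m := by have := i.isLt; omega
          rw [Fin.coe_castSucc, Fin.val_succ, show (i:ℕ) = 2*l+1 by omega, hFo,
            show 2*l+1+1 = 2*(l+1) by ring, hFe]
          rw [dist_comm, dist_cpt_apt, claimB hδ' m l hlm, Real.sqrt_sq (hδ' _).le]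
          rw [hδ'def]; dsimp only
          rw [dif_pos (show 2*l+1 < k by omega)]
          exact congrArg δ (Fin.ext (by simp; omega))
    have hΨinj : Function.Injective Ψ := by
      intro f f' h
      funext i
      have h2 := congrFun h ⟨2*(i:ℕ), by have := i.isLt; omega⟩
      simp only [hΨdef] at h2
      rw [hFe, hFe] at h2
      obtain ⟨-, h4⟩ := cpt_injective hδ' i.isLt i.isLt h2
      simp only [hgdef] at h4
      rw [dif_pos i.isLt, dif_pos i.isLt] at h4
      exact Fin.ext h4
    have hsub : Set.range Ψ ⊆ S := by rintro _ ⟨f, rfl⟩; exact hchain f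
    have hfin : S.Finite := by
      apply Set.Finite.subset (Set.Finite.pi (fun _ : Fin (k+1) => P.finite_toSet))
      intro p hp
      exact fun i _ => hp.2.1 i
    have hcount : N^(m+1) ≤ Set.ncard S := by
      calc N^(m+1) = Nat.card (Fin (m+1) → Fin N) := by simp
        _ = Nat.card (Set.range Ψ) := (Nat.card_range_of_injective hΨinj).symm
        _ = Set.ncard (Set.range Ψ) := Nat.card_coe_set_eq _
        _ ≤ Set.ncard S := Set.ncard_le_ncard hsub hfin
    have hk2 : k/2 + 1 = m + 1 := by omega
    rw [hk2]
    have h2 : n - 2*m ≤ (m+1) * N := by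
      have h3 : (m+1)*N + (n-m) % (m+1) = n - m := by
        rw [hNdef]; exact Nat.div_add_mod _ _
      have h4 : (n-m) % (m+1) < m+1 := Nat.mod_lt _ (by omega)
      omega
    have h5 : n ≤ (2*m+1)*((m+1)*N) := by
      calc n = 2*m + (n - 2*m) := by omega
        _ ≤ 2*m*(n-2*m) + (n-2*m) := by
            have h6 := Nat.le_mul_of_pos_right (2*m) (show 0 < n - 2*m by omega)
            omega
        _ = (2*m+1)*(n-2*m) := by ring
        _ ≤ (2*m+1)*((m+1)*N) := Nat.mul_le_mul_left _ h2
    have hNlb : (n : ℝ) ≤ ((2*m+1)*(m+1) : ℝ) * N := by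
      calc (n:ℝ) ≤ (((2*m+1)*((m+1)*N) : ℕ) : ℝ) := by exact_mod_cast h5
        _ = ((2*m+1)*(m+1):ℝ) * N := by push_cast; ring
    calc (((2*m+1)*(m+1):ℝ))⁻¹ ^ (m+1) * (n:ℝ)^(m+1)
        = ((((2*m+1)*(m+1):ℝ))⁻¹ * n)^(m+1) := by rw [mul_pow]
      _ ≤ ((N:ℝ))^(m+1) := by
          apply pow_le_pow_left₀ (by positivity)
          rw [inv_mul_le_iff₀ (by positivity)]
          exact hNlb
      _ = ((N^(m+1) : ℕ) : ℝ) := by push_cast; ring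
      _ ≤ (Set.ncard S : ℝ) := Nat.cast_le.mpr hcount
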